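/- Let 0 < δ < 1/1000 and n be large. Let H be a bipartite graph with parts A_1 and A_2 where |A_1|, |A_2| ≥ (1/4 - 5δ)n, and suppose every vertex of A_1 is non-adjacent to at most 10δn vertices of A_2 and vice versa. Then: (1) For each odd ℓ with 80δn + 3 ≤ ℓ ≤ (1/2 - 10δ)n - 1 and any x_1 ∈ A_1, x_2 ∈ A_2, there is a path in H from x_1 to x_2 with exactly ℓ edges. (2) For each even ℓ in the same range and any distinct x_1, x_1' ∈ A_1, there is a path in H from x_1 to x_1' with exactly ℓ edges. -/

import Mathlib

open Finset SimpleGraph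

lemma chain_walk {V : Type} (G : SimpleGraph V) (f : ℕ → V) :
    ∀ L : ℕ, (∀ i, i < L → G.Adj (f i) (f (i+1))) →
    ∃ p : G.Walk (f 0) (f L), p.length = L ∧ p.support = (List.range (L+1)).map f := by
  intro L
  induction L with
  | zero => intro _; exact ⟨Walk.nil, by simp, by simp [List.range_succ]⟩
  | succ L ih =>
    intro h
    obtain ⟨p, hl, hs⟩ := ih (fun i hi => h i (hi.trans (Nat.lt_succ_self _)))
    refine ⟨p.concat (h L (Nat.lt_succ_self _)), ?_, ?_⟩
    · simp [Walk.length_concat, hl]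
    · rw [Walk.support_concat, hs, List.range_succ]
      rw [List.range_succ (n := L+1)]
      simp [List.concat_eq_append, List.range_succ]

lemma chain_path {V : Type} (G : SimpleGraph V) (f : ℕ → V) (L : ℕ)
    (hadj : ∀ i, i < L → G.Adj (f i) (f (i+1)))
    (hinj : ∀ i ≤ L, ∀ j ≤ L, f i = f j → i = j) :
    ∃ p : G.Walk (f 0) (f L), p.IsPath ∧ p.length = L ∧
      ∀ v ∈ p.support, ∃ i ≤ L, v = f i := by
  obtain ⟨p, hl, hs⟩ := chain_walk G f L hadj
  refine ⟨p, ?_, hl, ?_⟩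
  · rw [Walk.isPath_def, hs]
    refine List.Nodup.map_on ?_ List.nodup_range
    intro i hi j hj hf
    exact hinj i (Nat.lt_succ_iff.mp (List.mem_range.mp hi)) j
      (Nat.lt_succ_iff.mp (List.mem_range.mp hj)) hf
  · intro v hv
    rw [hs] at hv
    obtain ⟨i, hi, rfl⟩ := List.mem_map.mp hv
    exact ⟨i, Nat.lt_succ_iff.mp (List.mem_range.mp hi), rfl⟩

open Finset Equiv Equiv.Perm

variable {α : Type} [Fintype α] [DecidableEq α]

lemma merge_aux1 (π : Equiv.Perm α) (a u : α) (h : ¬ π.SameCycle a u) :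
    (π * Equiv.swap a u).SameCycle a u := by
  have hau : a ≠ u := fun e => h (e ▸ Equiv.Perm.SameCycle.refl π a)
  set π' := π * Equiv.swap a u with hπ'
  have hP : ∃ k, 0 < k ∧ (π ^ k) u = u := ⟨orderOf π, orderOf_pos π, by
    rw [pow_orderOf_eq_one]; rfl⟩
  classical
  let m := Nat.find hP
  have hm : 0 < m ∧ (π ^ m) u = u := Nat.find_spec hP
  have key : ∀ j, 1 ≤ j → j ≤ m → (π' ^ j) a = (π ^ j) u := by
    intro j
    induction j with
    | zero => omega
    | succ j ih =>
      intro _ hjm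
      rcases Nat.eq_zero_or_pos j with h1 | h1
      · subst h1
        simp only [zero_add, pow_one, hπ', Equiv.Perm.mul_apply, Equiv.swap_apply_left]
      · have hj1 : 1 ≤ j := by omega
        have hjm' : j ≤ m := by omega
        have hne_a : (π ^ j) u ≠ a := by
          intro e
          exact h (Equiv.Perm.SameCycle.symm ⟨(j : ℤ), by rw [zpow_natCast, e]⟩)
        have hne_u : (π ^ j) u ≠ u := by
          intro e
          have := Nat.find_min hP (m := j) (by omega)
          exact this ⟨hj1, e⟩
        have : (π' ^ (j + 1)) a = π' ((π ^ j) u) := by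
          rw [pow_succ', Equiv.Perm.mul_apply, ih hj1 hjm']
        rw [this, hπ', Equiv.Perm.mul_apply, Equiv.swap_apply_of_ne_of_ne hne_a hne_u,
          ← Equiv.Perm.mul_apply, ← pow_succ']
  have : (π' ^ m) a = u := by rw [key m hm.1 le_rfl, hm.2]
  exact ⟨(m : ℤ), by rw [zpow_natCast, this]⟩

lemma merge_aux2 (π : Equiv.Perm α) (a u : α) (h : ¬ π.SameCycle a u) :
    ∀ x, (π * Equiv.swap a u).SameCycle x (π x) := by
  intro x
  set π' := π * Equiv.swap a u with hπ'
  by_cases hxa : x = a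
  · subst hxa
    have h1 : π' u = π x := by
      simp [hπ', Equiv.Perm.mul_apply, Equiv.swap_apply_right]
    have := (merge_aux1 π x u h).trans (h1 ▸ Equiv.Perm.sameCycle_apply_right.mpr
      (Equiv.Perm.SameCycle.refl π' u))
    exact this
  · by_cases hxu : x = u
    · subst hxu
      have h1 : π' a = π x := by
        simp [hπ', Equiv.Perm.mul_apply, Equiv.swap_apply_left]
      exact ((merge_aux1 π a x h).symm).trans (h1 ▸ Equiv.Perm.sameCycle_apply_right.mpr
        (Equiv.Perm.SameCycle.refl π' a))
    · have h1 : π' x = π x := by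
        simp [hπ', Equiv.Perm.mul_apply, Equiv.swap_apply_of_ne_of_ne hxa hxu]
      exact h1 ▸ Equiv.Perm.sameCycle_apply_right.mpr (Equiv.Perm.SameCycle.refl π' x)

lemma merge_aux3 (π : Equiv.Perm α) (a u : α) (h : ¬ π.SameCycle a u)
    {x y : α} (hxy : π.SameCycle x y) : (π * Equiv.swap a u).SameCycle x y := by
  obtain ⟨i, _, rfl⟩ := hxy.exists_pow_eq'
  clear * - h
  induction i with
  | zero => simpa using Equiv.Perm.SameCycle.refl (π * Equiv.swap a u) x
  | succ i ih =>
    have : (π ^ (i+1)) x = π ((π ^ i) x) := by rw [pow_succ', Equiv.Perm.mul_apply]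
    rw [this]
    exact ih.trans (merge_aux2 π a u h ((π ^ i) x))

open scoped Classical in
lemma perm_merge (C : α → α → Prop) [inst : ∀ u w, Decidable (C u w)] (d : ℕ)
    (hdeg1 : ∀ u, ((univ : Finset α).filter fun w => ¬ C u w).card ≤ d)
    (hdeg2 : ∀ w, ((univ : Finset α).filter fun u => ¬ C u w).card ≤ d)
    (hcard : 4 * d + 2 ≤ Fintype.card α) :
    ∀ N (π : Equiv.Perm α),
      ((univ : Finset (α × α)).filter fun p => ¬ π.SameCycle p.1 p.2).card ≤ N →
      (∀ u, C u (π u)) →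
      ∃ π' : Equiv.Perm α, (∀ u, C u (π' u)) ∧ ∀ a b, π'.SameCycle a b := by
  intro N
  induction N with
  | zero =>
    intro π hN hC
    refine ⟨π, hC, fun a b => ?_⟩
    by_contra hab
    have : (a, b) ∈ (univ : Finset (α × α)).filter fun p => ¬ π.SameCycle p.1 p.2 := by
      simp [hab]
    have := Finset.card_pos.mpr ⟨_, this⟩
    omega
  | succ N ih =>
    intro π hN hC
    by_cases hall : ∀ a b, π.SameCycle a b
    · exact ⟨π, hC, hall⟩
    push_neg at hall
    obtain ⟨a0, b0, hab0⟩ := hall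
    -- choose a with small cycle
    have hsmall : ∃ a b, ¬ π.SameCycle a b ∧
        2 * ((univ : Finset α).filter fun w => π.SameCycle a w).card ≤ Fintype.card α := by
      set Oa := (univ : Finset α).filter fun w => π.SameCycle a0 w with hOa
      set Ob := (univ : Finset α).filter fun w => π.SameCycle b0 w with hOb
      have hdisj : Disjoint Oa Ob := by
        rw [Finset.disjoint_left]
        intro c hca hcb
        rw [hOa, Finset.mem_filter] at hca
        rw [hOb, Finset.mem_filter] at hcb
        exact hab0 (hca.2.trans hcb.2.symm)
      have hsum : Oa.card + Ob.card ≤ Fintype.card α := by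
        rw [← Finset.card_union_of_disjoint hdisj, ← Finset.card_univ]
        exact Finset.card_le_card (Finset.subset_univ _)
      by_cases h2 : 2 * Oa.card ≤ Fintype.card α
      · exact ⟨a0, b0, hab0, h2⟩
      · refine ⟨b0, a0, fun hs => hab0 hs.symm, ?_⟩
        show 2 * Ob.card ≤ Fintype.card α
        omega
    obtain ⟨a, b, hab, hOsmall⟩ := hsmall
    -- find a good partner u
    set F := (univ : Finset α).filter
      (fun w => ¬ π.SameCycle a w ∧ C a (π w) ∧ C w (π a)) with hF
    have hFne : F.Nonempty := by
      by_contra hne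
      rw [Finset.not_nonempty_iff_eq_empty] at hne
      have hsub : (univ : Finset α) ⊆
          ((univ : Finset α).filter fun w => π.SameCycle a w) ∪
          ((univ : Finset α).filter fun w => ¬ C a (π w)) ∪
          ((univ : Finset α).filter fun w => ¬ C w (π a)) := by
        intro w _
        by_cases h1 : π.SameCycle a w
        · simp [h1]
        by_cases h2 : C a (π w)
        · by_cases h3 : C w (π a)
          · exfalso
            have : w ∈ F := by rw [hF]; simp [h1, h2, h3]
            rw [hne] at this
            exact absurd this (Finset.notMem_empty w)
          · simp [h3]
        · simp [h2]
      have hb1 : ((univ : Finset α).filter fun w => ¬ C a (π w)).card ≤ d := by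
        have : ((univ : Finset α).filter fun w => ¬ C a (π w)).card =
            ((univ : Finset α).filter fun v => ¬ C a v).card := by
          apply Finset.card_bij (fun w _ => π w)
          · intro w hw
            rw [Finset.mem_filter] at hw ⊢
            exact ⟨Finset.mem_univ _, hw.2⟩
          · intro w1 _ w2 _ he
            exact π.injective he
          · intro v hv
            rw [Finset.mem_filter] at hv
            exact ⟨π.symm v, by rw [Finset.mem_filter]; simpa using hv.2, by simp⟩
        rw [this]; exact hdeg1 a
      have hcard_le := Finset.card_le_card hsub
      have hu : ((univ : Finset α).filter fun w => π.SameCycle a w).card +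
          ((univ : Finset α).filter fun w => ¬ C a (π w)).card +
          ((univ : Finset α).filter fun w => ¬ C w (π a)).card ≥ Fintype.card α := by
        calc Fintype.card α = (univ : Finset α).card := (Finset.card_univ).symm
        _ ≤ _ := by
          refine hcard_le.trans ?_
          exact (Finset.card_union_le _ _).trans (by
            gcongr
            exact Finset.card_union_le _ _)
      have := hdeg2 (π a)
      omega
    obtain ⟨u, hu⟩ := hFne
    rw [hF, Finset.mem_filter] at hu
    obtain ⟨-, hau, hCau, hCua⟩ := hu
    have hane : a ≠ u := fun e => hau (e ▸ Equiv.Perm.SameCycle.refl π u)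
    set π' := π * Equiv.swap a u with hπ'
    have hC' : ∀ w, C w (π' w) := by
      intro w
      by_cases hwa : w = a
      · subst hwa
        simpa [hπ', Equiv.Perm.mul_apply, Equiv.swap_apply_left] using hCau
      by_cases hwu : w = u
      · subst hwu
        simpa [hπ', Equiv.Perm.mul_apply, Equiv.swap_apply_right] using hCua
      · simpa [hπ', Equiv.Perm.mul_apply, Equiv.swap_apply_of_ne_of_ne hwa hwu] using hC w
    have hmono : ((univ : Finset (α × α)).filter fun p => ¬ π'.SameCycle p.1 p.2) ⊂
        ((univ : Finset (α × α)).filter fun p => ¬ π.SameCycle p.1 p.2) := by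
      constructor
      · intro p hp
        rw [Finset.mem_filter] at hp ⊢
        exact ⟨hp.1, fun hs => hp.2 (merge_aux3 π a u hau hs)⟩
      · intro hsub
        have h1 : (a, u) ∈ (univ : Finset (α × α)).filter fun p => ¬ π.SameCycle p.1 p.2 := by
          simp [hau]
        have h2 := hsub h1
        rw [Finset.mem_filter] at h2
        exact h2.2 (merge_aux1 π a u hau)
    have hlt := Finset.card_lt_card hmono
    exact ih π' (by omega) hC'

open Finset

variable {V : Type} [DecidableEq V]

lemma card_attach_filter (S : Finset V) (p : V → Prop) [DecidablePred p] :
    (S.attach.filter fun v => p v.1).card = (S.filter p).card := by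
  refine Finset.card_bij (fun v _ => (v.1 : V)) ?_ ?_ ?_
  · intro v hv
    rw [Finset.mem_filter] at hv ⊢
    exact ⟨v.2, hv.2⟩
  · intro v1 _ v2 _ h
    exact Subtype.coe_injective h
  · intro w hw
    rw [Finset.mem_filter] at hw
    exact ⟨⟨w, hw.1⟩, by simp [hw.2], rfl⟩

lemma exists_hall_equiv1 (G : SimpleGraph V) [DecidableRel G.Adj] (S1 S2 : Finset V) (d s : ℕ)
    (hs1 : S1.card = s) (hs2 : S2.card = s) (hds : 2 * d + 2 ≤ s)
    (hdeg1 : ∀ u ∈ S1, (S2.filter fun w => ¬ G.Adj u w).card ≤ d)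
    (hdeg2 : ∀ v ∈ S2, (S1.filter fun w => ¬ G.Adj v w).card ≤ d) :
    ∃ σ : ↥S1 ≃ ↥S2, ∀ u : ↥S1, G.Adj ↑u ↑(σ u) := by
  classical
  set t1 : ↥S1 → Finset ↥S2 := fun u => S2.attach.filter fun v => G.Adj ↑u ↑v with ht1
  have htcard : ∀ u : ↥S1, s ≤ (t1 u).card + d := by
    intro u
    have h1 : (S2.filter fun w => G.Adj ↑u w).card + (S2.filter fun w => ¬ G.Adj ↑u w).card
        = S2.card := Finset.card_filter_add_card_filter_not _
    have h2 : (t1 u).card = (S2.filter fun w => G.Adj ↑u w).card := card_attach_filter _ _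
    have := hdeg1 ↑u u.2
    omega
  have hhall : ∀ T : Finset ↥S1, T.card ≤ (T.biUnion t1).card := by
    intro T
    rcases T.eq_empty_or_nonempty with rfl | ⟨u0, hu0⟩
    · simp
    by_cases hT : T.card ≤ s - d
    · have : t1 u0 ⊆ T.biUnion t1 := Finset.subset_biUnion_of_mem t1 hu0
      have := Finset.card_le_card this
      have := htcard u0
      omega
    · -- T is large: every v ∈ S2 has a neighbour in T
      have hsub : (S2.attach : Finset ↥S2) ⊆ T.biUnion t1 := by
        intro v _
        rw [Finset.mem_biUnion]
        by_contra hnone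
        push_neg at hnone
        have hTim : T.image (fun u : ↥S1 => (u : V)) ⊆ S1.filter fun w => ¬ G.Adj ↑v w := by
          intro w hw
          rw [Finset.mem_image] at hw
          obtain ⟨u, hu, rfl⟩ := hw
          have := hnone u hu
          rw [ht1, Finset.mem_filter] at this
          push_neg at this
          have hna := this (Finset.mem_attach _ _)
          rw [Finset.mem_filter]
          exact ⟨u.2, fun hadj => hna (hadj.symm)⟩
        have h1 := Finset.card_le_card hTim
        rw [Finset.card_image_of_injective _ Subtype.coe_injective] at h1
        have := hdeg2 ↑v v.2
        omega
      have h1 := Finset.card_le_card hsub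
      rw [Finset.card_attach, hs2] at h1
      have h2 : T.card ≤ s := by
        have := Finset.card_le_univ T
        rwa [Fintype.card_coe, hs1] at this
      omega
  obtain ⟨f, hinj, hmem⟩ := (Finset.all_card_le_biUnion_card_iff_exists_injective t1).mp hhall
  have hbij : Function.Bijective f := by
    rw [Fintype.bijective_iff_injective_and_card]
    exact ⟨hinj, by rw [Fintype.card_coe, Fintype.card_coe, hs1, hs2]⟩
  refine ⟨Equiv.ofBijective f hbij, fun u => ?_⟩
  have := hmem u
  rw [ht1, Finset.mem_filter] at this
  exact this.2

lemma exists_hall_equiv2 (G : SimpleGraph V) [DecidableRel G.Adj] (S1 S2 : Finset V) (d s : ℕ)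
    (hs1 : S1.card = s) (hs2 : S2.card = s) (hds : 2 * d + 2 ≤ s)
    (hdeg1 : ∀ u ∈ S1, (S2.filter fun w => ¬ G.Adj u w).card ≤ d)
    (hdeg2 : ∀ v ∈ S2, (S1.filter fun w => ¬ G.Adj v w).card ≤ d)
    (x y : V) (hx : x ∈ S1) (hy : y ∈ S2) :
    ∃ τ : ↥S2 ≃ ↥S1, τ ⟨y, hy⟩ = ⟨x, hx⟩ ∧
      ∀ v : ↥S2, v ≠ ⟨y, hy⟩ → G.Adj ↑v ↑(τ v) := by
  classical
  set y' : ↥S2 := ⟨y, hy⟩ with hy'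
  set x' : ↥S1 := ⟨x, hx⟩ with hx'
  set t2 : ↥S2 → Finset ↥S1 := fun v =>
    if v = y' then {x'} else S1.attach.filter fun u => G.Adj ↑v u.1 with ht2
  have htcard : ∀ v : ↥S2, v ≠ y' → s ≤ (t2 v).card + d := by
    intro v hv
    have h1 : (S1.filter fun w => G.Adj ↑v w).card + (S1.filter fun w => ¬ G.Adj ↑v w).card
        = S1.card := Finset.card_filter_add_card_filter_not _
    have h2 : (t2 v).card = (S1.filter fun w => G.Adj ↑v w).card := by
      rw [ht2]; simp only [if_neg hv]; exact card_attach_filter _ _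
    have h3 := hdeg2 ↑v v.2
    omega
  have hhall : ∀ T : Finset ↥S2, T.card ≤ (T.biUnion t2).card := by
    intro T
    by_cases hTy : ∃ v0 ∈ T, v0 ≠ y'
    · obtain ⟨v0, hv0T, hv0y⟩ := hTy
      by_cases hT : T.card ≤ s - d
      · have hsubT : t2 v0 ⊆ T.biUnion t2 := Finset.subset_biUnion_of_mem t2 hv0T
        have := Finset.card_le_card hsubT
        have := htcard v0 hv0y
        omega
      · have hsub : (S1.attach : Finset ↥S1) ⊆ T.biUnion t2 := by
          intro u _
          rw [Finset.mem_biUnion]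
          by_contra hnone
          push_neg at hnone
          have hTim : (T.erase y').image (fun v : ↥S2 => (v : V)) ⊆
              S2.filter fun w => ¬ G.Adj ↑u w := by
            intro w hw
            rw [Finset.mem_image] at hw
            obtain ⟨v, hv, rfl⟩ := hw
            have hvy := Finset.ne_of_mem_erase hv
            have := hnone v (Finset.mem_of_mem_erase hv)
            rw [ht2] at this
            simp only [if_neg hvy, Finset.mem_filter] at this
            push_neg at this
            have hna := this (Finset.mem_attach _ _)
            rw [Finset.mem_filter]
            exact ⟨v.2, fun hadj => hna hadj.symm⟩
          have h1 := Finset.card_le_card hTim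
          rw [Finset.card_image_of_injective _ Subtype.coe_injective] at h1
          have h2 := hdeg1 ↑u u.2
          have h3 : T.card - 1 ≤ (T.erase y').card := by
            rcases Finset.decidableMem y' T with hyT | hyT
            · rw [Finset.erase_eq_of_notMem hyT]; omega
            · rw [Finset.card_erase_of_mem hyT]
          omega
        have h1 := Finset.card_le_card hsub
        rw [Finset.card_attach, hs1] at h1
        have h2 : T.card ≤ s := by
          have := Finset.card_le_univ T
          rwa [Fintype.card_coe, hs2] at this
        omega
    · push_neg at hTy
      have hsub : T ⊆ {y'} := fun v hv => Finset.mem_singleton.mpr (hTy v hv)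
      have h1 : T.card ≤ 1 := (Finset.card_le_card hsub).trans (by simp)
      rcases T.eq_empty_or_nonempty with rfl | ⟨v0, hv0⟩
      · simp
      · have hy0 : v0 = y' := hTy v0 hv0
        have : t2 v0 ⊆ T.biUnion t2 := Finset.subset_biUnion_of_mem t2 hv0
        have h2 := Finset.card_le_card this
        have h3 : (t2 v0).card = 1 := by rw [ht2]; simp [hy0]
        omega
  obtain ⟨f, hinj, hmem⟩ := (Finset.all_card_le_biUnion_card_iff_exists_injective t2).mp hhall
  have hbij : Function.Bijective f := by
    rw [Fintype.bijective_iff_injective_and_card]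
    exact ⟨hinj, by rw [Fintype.card_coe, Fintype.card_coe, hs1, hs2]⟩
  refine ⟨Equiv.ofBijective f hbij, ?_, fun v hv => ?_⟩
  · have := hmem y'
    rw [ht2] at this
    simp only [if_pos rfl] at this
    exact Finset.mem_singleton.mp this
  · have := hmem v
    rw [ht2] at this
    simp only [if_neg hv, Finset.mem_filter] at this
    exact this.2
lemma ham_path (G : SimpleGraph V) [DecidableRel G.Adj] (S1 S2 : Finset V)
    (hdisj : Disjoint S1 S2) (d s : ℕ) (hs1 : S1.card = s) (hs2 : S2.card = s)
    (h4d : 4 * d + 2 ≤ s)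
    (hdeg1 : ∀ u ∈ S1, (S2.filter fun w => ¬ G.Adj u w).card ≤ d)
    (hdeg2 : ∀ v ∈ S2, (S1.filter fun w => ¬ G.Adj v w).card ≤ d)
    (x y : V) (hx : x ∈ S1) (hy : y ∈ S2) :
    ∃ p : G.Walk x y, p.IsPath ∧ p.length = 2 * s - 1 ∧
      ∀ v ∈ p.support, v ∈ S1 ∨ v ∈ S2 := by
  classical
  have hds : 2 * d + 2 ≤ s := by omega
  obtain ⟨σ0, hσ0⟩ := exists_hall_equiv1 G S1 S2 d s hs1 hs2 hds hdeg1 hdeg2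
  obtain ⟨τ, hτy, hτv⟩ := exists_hall_equiv2 G S1 S2 d s hs1 hs2 hds hdeg1 hdeg2 x y hx hy
  set x' : ↥S1 := ⟨x, hx⟩ with hx'
  set y' : ↥S2 := ⟨y, hy⟩ with hy'
  set C : ↥S1 → ↥S1 → Prop := fun u w => G.Adj ↑u ↑(τ.symm w) with hC
  have hcardS1 : Fintype.card ↥S1 = s := by rw [Fintype.card_coe, hs1]
  have hdeg1' : ∀ u : ↥S1, ((univ : Finset ↥S1).filter fun w => ¬ C u w).card ≤ d := by
    intro u
    have key : ((univ : Finset ↥S1).filter fun w => ¬ C u w).card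
        = ((univ : Finset ↥S2).filter fun v => ¬ G.Adj ↑u v.1).card := by
      refine Finset.card_bij (fun w _ => τ.symm w) ?_ ?_ ?_
      · intro w hw; rw [Finset.mem_filter] at hw ⊢; exact ⟨Finset.mem_univ _, hw.2⟩
      · intro w1 _ w2 _ h; exact τ.symm.injective h
      · intro v hv
        rw [Finset.mem_filter] at hv
        refine ⟨τ v, ?_, by simp⟩
        rw [Finset.mem_filter]
        refine ⟨Finset.mem_univ _, ?_⟩
        rw [hC]
        simpa using hv.2
    rw [key, Finset.univ_eq_attach]
    exact le_trans (le_of_eq (card_attach_filter S2 fun w => ¬ G.Adj ↑u w)) (hdeg1 ↑u u.2)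
  have hdeg2' : ∀ w : ↥S1, ((univ : Finset ↥S1).filter fun u => ¬ C u w).card ≤ d := by
    intro w
    have key : ((univ : Finset ↥S1).filter fun u => ¬ C u w) ⊆
        ((univ : Finset ↥S1).filter fun u => ¬ G.Adj ↑(τ.symm w) u.1) := by
      intro u hu; rw [Finset.mem_filter] at hu ⊢
      exact ⟨Finset.mem_univ _, fun h => hu.2 h.symm⟩
    refine (Finset.card_le_card key).trans ?_
    rw [Finset.univ_eq_attach]
    exact le_trans (le_of_eq (card_attach_filter S1 fun u => ¬ G.Adj ↑(τ.symm w) u))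
      (hdeg2 ↑(τ.symm w) (τ.symm w).2)
  set π0 : Equiv.Perm ↥S1 := σ0.trans τ with hπ0
  have hC0 : ∀ u, C u (π0 u) := by
    intro u
    show G.Adj ↑u ↑(τ.symm (π0 u))
    have h : τ.symm (π0 u) = σ0 u := by rw [hπ0]; simp
    rw [h]
    exact hσ0 u
  obtain ⟨π, hCπ, hall⟩ := perm_merge C d hdeg1' hdeg2' (by omega) _ π0 le_rfl hC0
  have hs2' : 2 ≤ s := by omega
  have hmoved : ∃ z : ↥S1, π z ≠ z := by
    by_contra hfix
    push_neg at hfix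
    obtain ⟨a, b, hab⟩ := Fintype.exists_pair_of_one_lt_card
      (by omega : 1 < Fintype.card ↥S1)
    obtain ⟨i, hi⟩ := hall a b
    rw [Equiv.Perm.zpow_apply_eq_self_of_apply_eq_self (hfix a) i] at hi
    exact hab hi
  obtain ⟨z0, hz0⟩ := hmoved
  have hcyc : π.IsCycle := ⟨z0, hz0, fun w _ => hall z0 w⟩
  have hsupp : π.support = univ := by
    ext w
    simp only [Equiv.Perm.mem_support, Finset.mem_univ, iff_true]
    intro hfw
    obtain ⟨i, hi⟩ := hall w z0
    rw [Equiv.Perm.zpow_apply_eq_self_of_apply_eq_self hfw i] at hi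
    rw [← hi] at hz0
    exact hz0 hfw
  have horder : orderOf π = s := by
    rw [hcyc.orderOf, hsupp, Finset.card_univ, hcardS1]
  have hπs : π ^ s = 1 := by rw [← horder]; exact pow_orderOf_eq_one π
  have hpow_inj : ∀ k, k < s → ∀ j, j < s → (π ^ k) x' = (π ^ j) x' → k = j := by
    have key : ∀ k j, j ≤ k → k < s → (π ^ k) x' = (π ^ j) x' → k = j := by
      intro k j hjk hks heq
      by_contra hne
      have h1 : (π ^ (k - j)) ((π ^ j) x') = (π ^ j) x' := by
        rw [← Equiv.Perm.mul_apply, ← pow_add, Nat.sub_add_cancel hjk]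
        exact heq
      have hxmem : π ((π ^ j) x') ≠ (π ^ j) x' := by
        have : (π ^ j) x' ∈ π.support := by rw [hsupp]; exact Finset.mem_univ _
        exact Equiv.Perm.mem_support.mp this
      have h2 : π ^ (k - j) = 1 := (hcyc.pow_eq_one_iff' hxmem).mpr h1
      have h3 := orderOf_le_of_pow_eq_one (by omega : 0 < k - j) h2
      omega
    intro k hk j hj heq
    rcases le_total j k with h | h
    · exact key k j h hk heq
    · exact (key j k h hj heq.symm).symm
  set σ : ↥S1 → ↥S2 := fun u => τ.symm (π u) with hσdef
  have hσadj : ∀ u : ↥S1, G.Adj ↑u ↑(σ u) := fun u => hCπ u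
  have hσinj : Function.Injective σ := fun a b h => π.injective (τ.symm.injective h)
  have hτσ : ∀ u, τ (σ u) = π u := fun u => by rw [hσdef]; simp
  set f : ℕ → V := fun i =>
    if i % 2 = 0 then (((π ^ (i / 2)) x' : ↥S1) : V) else ((σ ((π ^ (i / 2)) x') : ↥S2) : V)
    with hfdef
  have feval0 : ∀ i, i % 2 = 0 → f i = (((π ^ (i / 2)) x' : ↥S1) : V) := by
    intro i h; rw [hfdef]; simp [h]
  have feval1 : ∀ i, i % 2 = 1 → f i = ((σ ((π ^ (i / 2)) x') : ↥S2) : V) := by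
    intro i h; rw [hfdef]; simp [h]
  have hf0 : f 0 = x := by
    rw [feval0 0 rfl]
    simp [hx']
  have hfL : f (2 * s - 1) = y := by
    have h1 : π ((π ^ (s - 1)) x') = x' := by
      rw [← Equiv.Perm.mul_apply, ← pow_succ']
      have hss : s - 1 + 1 = s := by omega
      rw [hss, hπs]
      rfl
    have hy'' : σ ((π ^ (s - 1)) x') = y' := by
      apply τ.injective
      rw [hτσ, h1, hτy]
    rw [feval1 _ (by omega), (by omega : (2 * s - 1) / 2 = s - 1), hy'', hy']
  have hadj : ∀ i, i < 2 * s - 1 → G.Adj (f i) (f (i + 1)) := by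
    intro i hi
    rcases Nat.even_or_odd i with he | ho
    · have h2 : i % 2 = 0 := Nat.even_iff.mp he
      rw [feval0 i h2, feval1 (i + 1) (by omega), (by omega : (i + 1) / 2 = i / 2)]
      exact hσadj _
    · have h2 : i % 2 = 1 := Nat.odd_iff.mp ho
      have hk : i / 2 + 1 < s := by omega
      set v := σ ((π ^ (i / 2)) x') with hv
      have htv : τ v = (π ^ (i / 2 + 1)) x' := by
        rw [hv, hτσ, ← Equiv.Perm.mul_apply, ← pow_succ']
      have hvy : v ≠ y' := by
        intro hvy
        have hτvx : τ v = x' := by rw [hvy, hτy]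
        rw [htv] at hτvx
        have : (π ^ (i / 2 + 1)) x' = (π ^ 0) x' := by rw [pow_zero]; exact hτvx
        have := hpow_inj _ hk 0 (by omega) this
        omega
      have hadjv : G.Adj ↑v ↑(τ v) := hτv v hvy
      rw [feval1 i h2, feval0 (i + 1) (by omega), (by omega : (i + 1) / 2 = i / 2 + 1), ← htv]
      exact hadjv
  have hinj : ∀ i, i ≤ 2 * s - 1 → ∀ j, j ≤ 2 * s - 1 → f i = f j → i = j := by
    have hmem1 : ∀ i, i % 2 = 0 → f i ∈ S1 := by
      intro i h; rw [feval0 i h]; exact Finset.coe_mem _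
    have hmem2 : ∀ i, i % 2 = 1 → f i ∈ S2 := by
      intro i h; rw [feval1 i h]; exact Finset.coe_mem _
    intro i hi j hj hf
    rcases Nat.even_or_odd i with he | ho <;> rcases Nat.even_or_odd j with he' | ho'
    · have h2 : i % 2 = 0 := Nat.even_iff.mp he
      have h3 : j % 2 = 0 := Nat.even_iff.mp he'
      rw [feval0 i h2, feval0 j h3] at hf
      have := hpow_inj (i / 2) (by omega) (j / 2) (by omega) (Subtype.coe_injective hf)
      omega
    · exfalso
      have h1 := hmem1 i (Nat.even_iff.mp he)
      have h2 := hmem2 j (Nat.odd_iff.mp ho')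
      rw [hf] at h1
      exact Finset.disjoint_left.mp hdisj h1 h2
    · exfalso
      have h1 := hmem2 i (Nat.odd_iff.mp ho)
      have h2 := hmem1 j (Nat.even_iff.mp he')
      rw [hf] at h1
      exact Finset.disjoint_left.mp hdisj h2 h1
    · have h2 : i % 2 = 1 := Nat.odd_iff.mp ho
      have h3 : j % 2 = 1 := Nat.odd_iff.mp ho'
      rw [feval1 i h2, feval1 j h3] at hf
      have := hσinj (Subtype.coe_injective hf)
      have := hpow_inj (i / 2) (by omega) (j / 2) (by omega) this
      omega
  obtain ⟨p, hpath, hlen, hsup⟩ := chain_path G f (2 * s - 1) hadj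
    (fun i hi j hj => hinj i hi j hj)
  refine ⟨p.copy hf0 hfL, ?_, ?_, ?_⟩
  · rwa [SimpleGraph.Walk.isPath_copy]
  · rw [SimpleGraph.Walk.length_copy]; exact hlen
  · intro v hv
    rw [SimpleGraph.Walk.support_copy] at hv
    obtain ⟨i, _, rfl⟩ := hsup v hv
    rcases Nat.even_or_odd i with he | ho
    · left
      rw [feval0 i (Nat.even_iff.mp he)]
      exact Finset.coe_mem _
    · right
      rw [feval1 i (Nat.odd_iff.mp ho)]
      exact Finset.coe_mem _

set_option maxHeartbeats 1000000 in
theorem stmt11 (δ : ℝ) (hδ0 : 0 < δ) (hδ1 : δ < 1 / 1000) :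
    ∃ n₀ : ℕ, ∀ n : ℕ, n₀ ≤ n →
    ∀ (V : Type) [Fintype V] [DecidableEq V]
      (H : SimpleGraph V) [DecidableRel H.Adj] (A1 A2 : Finset V),
      Disjoint A1 A2 →
      -- |A_1|, |A_2| ≥ (1/4 - 5δ)n
      ((1 : ℝ) / 4 - 5 * δ) * n ≤ A1.card →
      ((1 : ℝ) / 4 - 5 * δ) * n ≤ A2.card →
      -- H is bipartite with parts A1, A2
      (∀ u v : V, H.Adj u v → (u ∈ A1 ∧ v ∈ A2) ∨ (u ∈ A2 ∧ v ∈ A1)) →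
      -- every vertex has deficiency at most 10δn
      (∀ v ∈ A1, ((A2.filter fun w => ¬ H.Adj v w).card : ℝ) ≤ 10 * δ * n) →
      (∀ v ∈ A2, ((A1.filter fun w => ¬ H.Adj v w).card : ℝ) ≤ 10 * δ * n) →
      ∀ ℓ : ℕ, 80 * δ * n + 3 ≤ (ℓ : ℝ) → (ℓ : ℝ) ≤ ((1 : ℝ) / 2 - 10 * δ) * n - 1 →
        -- (1) odd ℓ: a path of exactly ℓ edges between any x₁ ∈ A₁ and x₂ ∈ A₂
        ((Odd ℓ → ∀ x1 ∈ A1, ∀ x2 ∈ A2,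
            ∃ p : H.Walk x1 x2, p.IsPath ∧ p.length = ℓ) ∧
        -- (2) even ℓ: a path of exactly ℓ edges between any distinct x₁, x₁' ∈ A₁
         (Even ℓ → ∀ x1 ∈ A1, ∀ x1' ∈ A1, x1 ≠ x1' →
            ∃ p : H.Walk x1 x1', p.IsPath ∧ p.length = ℓ)) := by
  refine ⟨100, fun n hn V _ _ H _ A1 A2 hdisj hA1 hA2 hbip hdef1 hdef2 ℓ hl1 hl2 => ?_⟩
  classical
  set d : ℕ := ⌊10 * δ * n⌋₊ with hd
  have hδn0 : (0:ℝ) ≤ 10 * δ * n := by positivity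
  have hd_le : (d : ℝ) ≤ 10 * δ * n := Nat.floor_le hδn0
  have hdef1' : ∀ v ∈ A1, (A2.filter fun w => ¬ H.Adj v w).card ≤ d :=
    fun v hv => Nat.le_floor (hdef1 v hv)
  have hdef2' : ∀ v ∈ A2, (A1.filter fun w => ¬ H.Adj v w).card ≤ d :=
    fun v hv => Nat.le_floor (hdef2 v hv)
  have hn100 : (100:ℝ) ≤ (n:ℝ) := by exact_mod_cast hn
  have hprod : δ * (n:ℝ) ≤ (n:ℝ) / 1000 := by
    have h := mul_le_mul_of_nonneg_right (le_of_lt hδ1) (show (0:ℝ) ≤ (n:ℝ) by positivity)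
    linarith
  constructor
  · -- odd case
    intro hodd x1 hx1 x2 hx2
    obtain ⟨m, hm⟩ := hodd
    set s : ℕ := m + 1 with hs
    have hℓr : (ℓ : ℝ) = 2 * m + 1 := by rw [hm]; push_cast; ring
    have hsr : (s : ℝ) = (m : ℝ) + 1 := by rw [hs]; push_cast; ring
    have h4ds : 4 * d + 2 ≤ s := by
      have h : ((4 * d + 2 : ℕ) : ℝ) ≤ (s : ℝ) := by
        push_cast
        linarith [hd_le, hl1, hℓr]
      exact_mod_cast h
    have hsA1 : s ≤ A1.card := by
      have h : (s : ℝ) ≤ (A1.card : ℝ) := by linarith [hl2, hA1, hℓr]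
      exact_mod_cast h
    have hsA2 : s ≤ A2.card := by
      have h : (s : ℝ) ≤ (A2.card : ℝ) := by linarith [hl2, hA2, hℓr]
      exact_mod_cast h
    obtain ⟨S1, hS1x, hS1A, hS1card⟩ := Finset.exists_subsuperset_card_eq
      (Finset.singleton_subset_iff.mpr hx1) (by simp; omega) hsA1
    obtain ⟨S2, hS2x, hS2A, hS2card⟩ := Finset.exists_subsuperset_card_eq
      (Finset.singleton_subset_iff.mpr hx2) (by simp; omega) hsA2
    have hSdisj : Disjoint S1 S2 := hdisj.mono hS1A hS2A
    have hdegS1 : ∀ u ∈ S1, (S2.filter fun w => ¬ H.Adj u w).card ≤ d := by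
      intro u hu
      exact le_trans (Finset.card_le_card (Finset.filter_subset_filter _ hS2A))
        (hdef1' u (hS1A hu))
    have hdegS2 : ∀ v ∈ S2, (S1.filter fun w => ¬ H.Adj v w).card ≤ d := by
      intro v hv
      exact le_trans (Finset.card_le_card (Finset.filter_subset_filter _ hS1A))
        (hdef2' v (hS2A hv))
    obtain ⟨p, hp, hlen, -⟩ := ham_path H S1 S2 hSdisj d s hS1card hS2card h4ds
      hdegS1 hdegS2 x1 x2 (hS1x (Finset.mem_singleton_self x1))
      (hS2x (Finset.mem_singleton_self x2))
    exact ⟨p, hp, by omega⟩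
  · -- even case
    intro heven x1 hx1 x1' hx1' hne
    obtain ⟨m, hm⟩ := heven
    have hℓr : (ℓ : ℝ) = 2 * m := by rw [hm]; push_cast; ring
    have h4dm : 4 * d + 2 ≤ m := by
      have h : ((4 * d + 1 : ℕ) : ℝ) < (m : ℝ) := by
        push_cast
        linarith [hd_le, hl1, hℓr]
      have h2 : 4 * d + 1 < m := by exact_mod_cast h
      omega
    have hmA1 : m + 1 ≤ A1.card := by
      have h : ((m : ℕ) : ℝ) < (A1.card : ℝ) := by linarith [hl2, hA1, hℓr]
      have h2 : m < A1.card := by exact_mod_cast h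
      omega
    have hmA2 : m ≤ A2.card := by
      have h : ((m : ℕ) : ℝ) ≤ (A2.card : ℝ) := by linarith [hl2, hA2, hℓr]
      exact_mod_cast h
    -- pick a neighbour v of x1 in A2
    have hvne : (A2.filter fun w => H.Adj x1 w).Nonempty := by
      rw [← Finset.card_pos]
      have hsum : (A2.filter fun w => H.Adj x1 w).card
          + (A2.filter fun w => ¬ H.Adj x1 w).card = A2.card :=
        Finset.card_filter_add_card_filter_not _
      have h1 := hdef1' x1 hx1
      have h2 : (d : ℝ) < (A2.card : ℝ) := by linarith [hd_le, hA2, hprod, hn100]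
      have h3 : d < A2.card := by exact_mod_cast h2
      omega
    obtain ⟨v, hv⟩ := hvne
    rw [Finset.mem_filter] at hv
    obtain ⟨hvA2, hadjv⟩ := hv
    have hx1'e : x1' ∈ A1.erase x1 := Finset.mem_erase.mpr ⟨Ne.symm hne, hx1'⟩
    have hcarde : m ≤ (A1.erase x1).card := by
      rw [Finset.card_erase_of_mem hx1]
      omega
    obtain ⟨S1, hS1x, hS1A, hS1card⟩ := Finset.exists_subsuperset_card_eq
      (Finset.singleton_subset_iff.mpr hx1'e) (by simp; omega) hcarde
    obtain ⟨S2, hS2x, hS2A, hS2card⟩ := Finset.exists_subsuperset_card_eq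
      (Finset.singleton_subset_iff.mpr hvA2) (by simp; omega) hmA2
    have hS1A1 : S1 ⊆ A1 := hS1A.trans (Finset.erase_subset _ _)
    have hSdisj : Disjoint S1 S2 := hdisj.mono hS1A1 hS2A
    have hdegS1 : ∀ u ∈ S1, (S2.filter fun w => ¬ H.Adj u w).card ≤ d := by
      intro u hu
      exact le_trans (Finset.card_le_card (Finset.filter_subset_filter _ hS2A))
        (hdef1' u (hS1A1 hu))
    have hdegS2 : ∀ w ∈ S2, (S1.filter fun z => ¬ H.Adj w z).card ≤ d := by
      intro w hw
      exact le_trans (Finset.card_le_card (Finset.filter_subset_filter _ hS1A1))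
        (hdef2' w (hS2A hw))
    obtain ⟨p, hp, hlen, hsup⟩ := ham_path H S1 S2 hSdisj d m hS1card hS2card h4dm
      hdegS1 hdegS2 x1' v (hS1x (Finset.mem_singleton_self x1'))
      (hS2x (Finset.mem_singleton_self v))
    have hx1nsup : x1 ∉ p.reverse.support := by
      rw [SimpleGraph.Walk.support_reverse, List.mem_reverse]
      intro hmem
      rcases hsup x1 hmem with h | h
      · exact absurd (Finset.mem_erase.mp (hS1A h)).1 (by simp)
      · exact Finset.disjoint_left.mp hdisj hx1 (hS2A h)
    refine ⟨SimpleGraph.Walk.cons hadjv p.reverse, ?_, ?_⟩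
    · exact (hp.reverse).cons hx1nsup
    · rw [SimpleGraph.Walk.length_cons, SimpleGraph.Walk.length_reverse]
      omega
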